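/- Let p and q be probability mass functions on a finite set. Pinsker's inequality: D_TV(p‖q) ≤ √((1/2)·D_KL(p‖q)), where D_TV(p‖q) = (1/2)Σ|p(x) − q(x)| and D_KL(p‖q) = Σ p(x)·log(p(x)/q(x)). -/

import Mathlib

-- derivative helper: F s = (s+1) * log s - 2*(s-1), F' = log s + (s+1)/s - 2
lemma F_hasDeriv (t : ℝ) (ht : 0 < t) :
    HasDerivAt (fun s : ℝ => (s+1) * Real.log s - 2*(s-1))
      (Real.log t + (t+1) * t⁻¹ - 2) t := by
  have h1 : HasDerivAt (fun s : ℝ => s + 1) 1 t := (hasDerivAt_id t).add_const 1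
  have h2 := Real.hasDerivAt_log (ne_of_gt ht)
  have h3 := h1.mul h2
  have h4 : HasDerivAt (fun s : ℝ => 2*(s-1)) 2 t := by
    simpa using (((hasDerivAt_id t).sub_const 1).const_mul 2)
  have := h3.sub h4
  exact this.congr_deriv (by ring)

lemma F_deriv_nonneg (t : ℝ) (ht : 0 < t) : 0 ≤ Real.log t + (t+1) * t⁻¹ - 2 := by
  have h := Real.log_le_sub_one_of_pos (show (0:ℝ) < t⁻¹ by positivity)
  rw [Real.log_inv] at h
  have : (t+1) * t⁻¹ = 1 + t⁻¹ := by field_simp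
  rw [this]; linarith

lemma F_mono {a b : ℝ} (ha : 0 < a) (hab : a ≤ b) :
    (a+1) * Real.log a - 2*(a-1) ≤ (b+1) * Real.log b - 2*(b-1) := by
  set f : ℝ → ℝ := fun s => (s+1) * Real.log s - 2*(s-1) with hf
  have key : MonotoneOn f (Set.Icc a b) := by
    apply monotoneOn_of_deriv_nonneg (convex_Icc a b)
    · apply ContinuousOn.sub
      · exact (continuousOn_id.add continuousOn_const).mul
          (Real.continuousOn_log.mono (by intro x hx; simp; exact ne_of_gt (lt_of_lt_of_le ha hx.1)))
      · fun_prop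
    · intro x hx
      rw [interior_Icc] at hx
      exact (F_hasDeriv x (lt_trans ha hx.1)).differentiableAt.differentiableWithinAt
    · intro x hx
      rw [interior_Icc] at hx
      rw [(F_hasDeriv x (lt_trans ha hx.1)).deriv]
      exact F_deriv_nonneg x (lt_trans ha hx.1)
  exact key (Set.left_mem_Icc.2 hab) (Set.right_mem_Icc.2 hab) hab

lemma G_hasDeriv (t : ℝ) (ht : 0 < t) :
    HasDerivAt (fun s : ℝ => 2*(s+2)*(s*Real.log s - s + 1) - 3*(s-1)^2)
      (4*((t+1) * Real.log t - 2*(t-1))) t := by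
  have h1 : HasDerivAt (fun s : ℝ => 2*(s+2)) 2 t := by
    simpa using ((hasDerivAt_id t).add_const 2).const_mul 2
  have h2 : HasDerivAt (fun s : ℝ => s*Real.log s - s + 1) (Real.log t) t := by
    have := ((Real.hasDerivAt_mul_log (ne_of_gt ht)).sub (hasDerivAt_id t)).add_const 1
    exact this.congr_deriv (by ring)
  have h3 : HasDerivAt (fun s : ℝ => 3*(s-1)^2) (3*(2*(t-1))) t := by
    simpa using (((hasDerivAt_id t).sub_const 1).pow 2).const_mul 3
  have := (h1.mul h2).sub h3
  exact this.congr_deriv (by ring)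

lemma G_cont : ContinuousOn (fun s : ℝ => 2*(s+2)*(s*Real.log s - s + 1) - 3*(s-1)^2) {s | s ≠ 0} := by
  have hlog : ContinuousOn Real.log {s : ℝ | s ≠ 0} := Real.continuousOn_log.mono (fun x hx => hx)
  have h1 : ContinuousOn (fun s : ℝ => s * Real.log s - s + 1) {s : ℝ | s ≠ 0} :=
    (continuousOn_id.mul hlog).sub continuousOn_id |>.add continuousOn_const
  exact (ContinuousOn.mul (by fun_prop) h1).sub (by fun_prop)

lemma G_nonneg (t : ℝ) (ht : 0 ≤ t) : 3*(t-1)^2 ≤ 2*(t+2)*(t*Real.log t - t + 1) := by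
  rcases eq_or_lt_of_le ht with h0 | h0
  · rw [← h0]; norm_num
  set g : ℝ → ℝ := fun s => 2*(s+2)*(s*Real.log s - s + 1) - 3*(s-1)^2 with hg
  have g1 : g 1 = 0 := by simp [hg]
  have hsub : ∀ a b : ℝ, 0 < a → Set.Icc a b ⊆ {s : ℝ | s ≠ 0} := by
    intro a b ha x hx; exact ne_of_gt (lt_of_lt_of_le ha hx.1)
  suffices h : 0 ≤ g t by simpa [hg] using h
  rcases le_total t 1 with h1 | h1
  · have anti : AntitoneOn g (Set.Icc t 1) := by
      apply antitoneOn_of_deriv_nonpos (convex_Icc t 1) (G_cont.mono (hsub _ _ h0))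
      · intro x hx
        rw [interior_Icc] at hx
        exact (G_hasDeriv x (lt_trans h0 hx.1)).differentiableAt.differentiableWithinAt
      · intro x hx
        rw [interior_Icc] at hx
        rw [(G_hasDeriv x (lt_trans h0 hx.1)).deriv]
        have := F_mono (lt_trans h0 hx.1) (le_of_lt hx.2)
        simp only [Real.log_one] at this
        nlinarith
    have := anti (Set.left_mem_Icc.2 h1) (Set.right_mem_Icc.2 h1) h1
    rw [g1] at this; exact this
  · have mono : MonotoneOn g (Set.Icc 1 t) := by
      apply monotoneOn_of_deriv_nonneg (convex_Icc 1 t) (G_cont.mono (hsub _ _ one_pos))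
      · intro x hx
        rw [interior_Icc] at hx
        exact (G_hasDeriv x (lt_trans one_pos hx.1)).differentiableAt.differentiableWithinAt
      · intro x hx
        rw [interior_Icc] at hx
        rw [(G_hasDeriv x (lt_trans one_pos hx.1)).deriv]
        have := F_mono one_pos (le_of_lt hx.1)
        simp only [Real.log_one] at this
        nlinarith
    have := mono (Set.left_mem_Icc.2 h1) (Set.right_mem_Icc.2 h1) h1
    rw [g1] at this; exact this

lemma pointwise_bound (a b : ℝ) (ha : 0 ≤ a) (hb : 0 < b) :
    (a - b)^2 / (a + 2*b) ≤ 2/3 * (a * Real.log (a/b) - a + b) := by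
  rw [div_le_iff₀ (by positivity)]
  set t := a / b with hts
  have key := G_nonneg t (by positivity)
  have hab : a = t * b := by rw [hts]; exact (div_mul_cancel₀ a hb.ne').symm
  rw [hab]
  nlinarith [mul_le_mul_of_nonneg_right key (sq_nonneg b), sq_nonneg b, hb.le]

/-- Pinsker's inequality for probability mass functions on a finite set:
`D_TV(p‖q) ≤ √((1/2)·D_KL(p‖q))`. -/
theorem pinsker_finite {X : Type*} [Fintype X]
    (p q : X → ℝ)
    (hp_nonneg : ∀ x, 0 ≤ p x) (hp_sum : ∑ x, p x = 1)
    (hq_nonneg : ∀ x, 0 ≤ q x) (hq_sum : ∑ x, q x = 1)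
    (habs : ∀ x, 0 < p x → 0 < q x) :
    (1 / 2) * ∑ x, |p x - q x| ≤
      Real.sqrt ((1 / 2) * ∑ x, p x * Real.log (p x / q x)) := by
  classical
  set s : Finset X := Finset.univ.filter (fun x => 0 < q x) with hs
  have hmem : ∀ x, x ∈ s ↔ 0 < q x := by intro x; simp [hs]
  have hzero : ∀ x ∉ s, p x = 0 ∧ q x = 0 := by
    intro x hx
    have hq : q x = 0 := le_antisymm (not_lt.1 fun h => hx ((hmem x).2 h)) (hq_nonneg x)
    refine ⟨?_, hq⟩
    by_contra hne
    have := habs x (lt_of_le_of_ne (hp_nonneg x) (Ne.symm hne))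
    rw [hq] at this; exact lt_irrefl 0 this
  -- restrict all sums to s
  have hTV : ∑ x, |p x - q x| = ∑ x ∈ s, |p x - q x| := by
    refine (Finset.sum_subset (Finset.subset_univ s) ?_).symm
    intro x _ hx; rcases hzero x hx with ⟨h1, h2⟩; rw [h1, h2]; simp
  have hKL : ∑ x, p x * Real.log (p x / q x) = ∑ x ∈ s, p x * Real.log (p x / q x) := by
    refine (Finset.sum_subset (Finset.subset_univ s) ?_).symm
    intro x _ hx; rw [(hzero x hx).1]; ring
  have hps : ∑ x ∈ s, p x = 1 := by
    rw [← hp_sum]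
    exact Finset.sum_subset (Finset.subset_univ s) (fun x _ hx => (hzero x hx).1)
  have hqs : ∑ x ∈ s, q x = 1 := by
    rw [← hq_sum]
    exact Finset.sum_subset (Finset.subset_univ s) (fun x _ hx => (hzero x hx).2)
  set T := ∑ x ∈ s, |p x - q x| with hT
  set KL := ∑ x ∈ s, p x * Real.log (p x / q x) with hKLdef
  have hTnn : 0 ≤ T := Finset.sum_nonneg fun x _ => abs_nonneg _
  -- Sedrakyan / Cauchy-Schwarz
  have sed := Finset.sq_sum_div_le_sum_sq_div s (fun x => |p x - q x|)
      (g := fun x => p x + 2 * q x)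
      (fun x hx => by have h1 := (hmem x).1 hx; have h2 := hp_nonneg x; show (0:ℝ) < p x + 2 * q x; linarith)
  have hg3 : ∑ x ∈ s, (p x + 2 * q x) = 3 := by
    rw [Finset.sum_add_distrib, ← Finset.mul_sum, hps, hqs]; norm_num
  rw [hg3] at sed
  have hpt : ∑ x ∈ s, |p x - q x| ^ 2 / (p x + 2 * q x)
      ≤ 2/3 * (KL - 1 + 1) := by
    rw [hKLdef]
    have : ∀ x ∈ s, |p x - q x| ^ 2 / (p x + 2 * q x)
        ≤ 2/3 * (p x * Real.log (p x / q x) - p x + q x) := by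
      intro x hx
      rw [sq_abs]
      exact pointwise_bound (p x) (q x) (hp_nonneg x) ((hmem x).1 hx)
    calc ∑ x ∈ s, |p x - q x| ^ 2 / (p x + 2 * q x)
        ≤ ∑ x ∈ s, 2/3 * (p x * Real.log (p x / q x) - p x + q x) :=
          Finset.sum_le_sum this
      _ = 2/3 * ((∑ x ∈ s, p x * Real.log (p x / q x)) - 1 + 1) := by
          rw [← Finset.mul_sum]
          congr 1
          rw [Finset.sum_add_distrib, Finset.sum_sub_distrib, hps, hqs]
  have hT2 : T ^ 2 ≤ 2 * KL := by
    have := le_trans sed hpt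
    rw [div_le_iff₀ (by norm_num : (0:ℝ) < 3)] at this
    linarith
  have hKLnn : 0 ≤ KL := by nlinarith [sq_nonneg T]
  rw [hTV, hKL]
  rw [Real.le_sqrt (by linarith) (by linarith)]
  nlinarith
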